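/- (Nonuniqueness corollary of the ill-posedness example.) The equation ∫_0^{t/2} x(s) ds − ∫_{t/2}^{t} x(s) ds = t (t > 0) has infinitely many solutions: for distinct real constants c₁ ≠ c₂, the functions x₁(s) = c₁ − (ln s)/(ln 2) and x₂(s) = c₂ − (ln s)/(ln 2) are distinct functions on (0,∞) and both satisfy the equation for every t > 0; hence the solution of this first-kind Volterra equation with jump discontinuous kernel is not unique. -/

import Mathlib

open intervalIntegral Set

lemma log_intervalIntegrable {a : ℝ} (ha : 0 < a) :
    IntervalIntegrable Real.log MeasureTheory.volume 0 a := by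
  set m := min a 1 with hm
  have hm0 : 0 < m := lt_min ha one_pos
  have hma : m ≤ a := min_le_left _ _
  have h1 : MeasureTheory.IntegrableOn (fun x => -Real.log x) (Ioc 0 m) := by
    apply intervalIntegral.integrableOn_deriv_of_nonneg
      (g := fun x => x - x * Real.log x)
    · exact (continuous_id.sub Real.continuous_mul_log).continuousOn
    · intro x hx
      have := (hasDerivAt_id x).sub (Real.hasDerivAt_mul_log hx.1.ne')
      exact this.congr_deriv (by ring)
    · intro x hx
      have : Real.log x ≤ 0 := Real.log_nonpos hx.1.le (hx.2.le.trans (min_le_right _ _))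
      linarith
  have h2 : IntervalIntegrable Real.log MeasureTheory.volume 0 m := by
    rw [intervalIntegrable_iff_integrableOn_Ioc_of_le hm0.le]
    exact MeasureTheory.integrable_neg_iff.mp h1
  have h3 : IntervalIntegrable Real.log MeasureTheory.volume m a := by
    apply ContinuousOn.intervalIntegrable
    apply Real.continuousOn_log.mono
    intro x hx
    have : m ≤ x := by
      rw [uIcc_of_le hma] at hx; exact hx.1
    simp only [mem_compl_iff, mem_singleton_iff]
    exact (hm0.trans_le this).ne'
  exact h2.trans h3

lemma integral_log_zero {a : ℝ} (ha : 0 < a) :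
    ∫ s in (0:ℝ)..a, Real.log s = a * Real.log a - a := by
  have h : ∫ s in (0:ℝ)..a, Real.log s =
      (a * Real.log a - a) - (0 * Real.log 0 - 0) := by
    apply integral_eq_sub_of_hasDeriv_right_of_le ha.le
    · exact (Real.continuous_mul_log.sub continuous_id).continuousOn
    · intro x hx
      have := (Real.hasDerivAt_mul_log hx.1.ne').sub (hasDerivAt_id x)
      have h2 : HasDerivAt (fun x => x * Real.log x - x) (Real.log x) x := by
        exact this.congr_deriv (by ring)
      exact h2.hasDerivWithinAt
    · exact log_intervalIntegrable ha
  simpa using h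

lemma key (c t : ℝ) (ht : 0 < t) :
    (∫ s in (0:ℝ)..(t / 2), (c - Real.log s / Real.log 2)) -
      (∫ s in (t / 2)..t, (c - Real.log s / Real.log 2)) = t := by
  have ht2 : 0 < t / 2 := by linarith
  have hL : Real.log 2 ≠ 0 := (Real.log_pos one_lt_two).ne'
  have hint1 : IntervalIntegrable Real.log MeasureTheory.volume 0 (t / 2) :=
    log_intervalIntegrable ht2
  have hint2 : IntervalIntegrable Real.log MeasureTheory.volume (t / 2) t := by
    apply ContinuousOn.intervalIntegrable
    apply Real.continuousOn_log.mono
    intro x hx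
    rw [uIcc_of_le (by linarith : t / 2 ≤ t)] at hx
    simp only [mem_compl_iff, mem_singleton_iff]
    exact (ht2.trans_le hx.1).ne'
  have e1 : (∫ s in (0:ℝ)..(t / 2), (c - Real.log s / Real.log 2)) =
      c * (t / 2) - (t / 2 * Real.log (t / 2) - t / 2) / Real.log 2 := by
    rw [integral_sub intervalIntegrable_const (hint1.div_const _),
      intervalIntegral.integral_div, integral_log_zero ht2]
    simp only [intervalIntegral.integral_const, smul_eq_mul, sub_zero]
    ring
  have e2 : (∫ s in (t / 2)..t, (c - Real.log s / Real.log 2)) =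
      c * (t / 2) - (t * Real.log t - t / 2 * Real.log (t / 2) - t + t / 2) / Real.log 2 := by
    rw [integral_sub intervalIntegrable_const (hint2.div_const _),
      intervalIntegral.integral_div, integral_log]
    simp only [intervalIntegral.integral_const, smul_eq_mul]
    ring
  rw [e1, e2]
  have hlog : Real.log (t / 2) = Real.log t - Real.log 2 :=
    Real.log_div ht.ne' two_ne_zero
  rw [hlog]
  field_simp
  ring

/-- **Nonuniqueness corollary of the ill-posedness example.** For distinct constants
`c₁ ≠ c₂`, the functions `x₁(s) = c₁ − ln s / ln 2` and `x₂(s) = c₂ − ln s / ln 2` are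
distinct on `(0,∞)` and both satisfy
`∫_0^{t/2} x(s) ds − ∫_{t/2}^{t} x(s) ds = t` for every `t > 0`: the solution of this
first-kind Volterra equation with jump discontinuous kernel is not unique. -/
theorem ill_posed_example_nonuniqueness (c₁ c₂ : ℝ) (hc : c₁ ≠ c₂) :
    (∃ s ∈ Ioi (0:ℝ),
      c₁ - Real.log s / Real.log 2 ≠ c₂ - Real.log s / Real.log 2) ∧
    (∀ t : ℝ, 0 < t →
      (∫ s in (0:ℝ)..(t / 2), (c₁ - Real.log s / Real.log 2)) -
        (∫ s in (t / 2)..t, (c₁ - Real.log s / Real.log 2)) = t) ∧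
    (∀ t : ℝ, 0 < t →
      (∫ s in (0:ℝ)..(t / 2), (c₂ - Real.log s / Real.log 2)) -
        (∫ s in (t / 2)..t, (c₂ - Real.log s / Real.log 2)) = t) := by
  refine ⟨⟨1, mem_Ioi.mpr one_pos, by simpa using hc⟩, fun t ht => key c₁ t ht,
    fun t ht => key c₂ t ht⟩
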